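/- Log-determinant lower bound for Toeplitz matrices: if ℓ ∈ L^2(h) satisfies ∫ ℓ h = 1 and 1/2 ≤ ℓ(x) ≤ 3/2 a.e., then log det(T_n(ℓ)) ≥ -n ||ℓ - 1||^2_{L^2(h)}. -/

import Mathlib

open MeasureTheory Real Matrix

set_option maxHeartbeats 1600000

/-- The `n × n` Toeplitz matrix of Fourier coefficients of `ℓ`. -/
noncomputable def toeplitz (n : ℕ) (ℓ : ℝ → ℝ) : Matrix (Fin n) (Fin n) ℂ :=
  fun j k => (1 / (2 * Real.pi)) * ∫ x in (-Real.pi)..Real.pi,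
    (ℓ x : ℂ) * Complex.exp (Complex.I * (((j : ℤ) - (k : ℤ) : ℤ) : ℂ) * (x : ℂ))

namespace ToeplitzAux

lemma neg_pi_le : (-Real.pi) ≤ Real.pi := by linarith [Real.pi_pos]

/-- conjugation commutes with interval integration -/
lemma intervalIntegral_conj {f : ℝ → ℂ} {a b : ℝ} :
    (starRingEnd ℂ) (∫ x in a..b, f x) = ∫ x in a..b, (starRingEnd ℂ) (f x) := by
  unfold intervalIntegral
  rw [map_sub, integral_conj, integral_conj]

lemma exp_orth (m : ℤ) :
    ∫ x in (-Real.pi)..Real.pi, Complex.exp (Complex.I * (m : ℂ) * x) =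
      if m = 0 then ((2 * Real.pi : ℝ) : ℂ) else 0 := by
  rcases eq_or_ne m 0 with h | h
  · simp only [h, Int.cast_zero, mul_zero, zero_mul, Complex.exp_zero, if_pos]
    rw [intervalIntegral.integral_const, Complex.real_smul]
    push_cast
    ring
  · rw [if_neg h]
    have hc : Complex.I * (m : ℂ) ≠ 0 :=
      mul_ne_zero Complex.I_ne_zero (by exact_mod_cast h)
    rw [integral_exp_mul_complex hc]
    have key : Complex.exp (Complex.I * (m : ℂ) * (Real.pi : ℂ)) =
        Complex.exp (Complex.I * (m : ℂ) * ((-Real.pi : ℝ) : ℂ)) := by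
      rw [show Complex.I * (m : ℂ) * ((-Real.pi : ℝ) : ℂ) =
          Complex.I * (m : ℂ) * (Real.pi : ℂ) + ((-m : ℤ) : ℂ) * (2 * (Real.pi : ℂ) * Complex.I)
          from by push_cast; ring, Complex.exp_add, Complex.exp_int_mul_two_pi_mul_I, mul_one]
    rw [key, sub_self, zero_div]

lemma integrable_mul_exp {w : ℝ → ℝ} (hw : Measurable w) {C : ℝ}
    (hb : ∀ᵐ x ∂(MeasureTheory.volume.restrict (Set.Icc (-Real.pi) Real.pi)), |w x| ≤ C)
    (m : ℤ) :
    IntervalIntegrable (fun x => (w x : ℂ) * Complex.exp (Complex.I * (m : ℂ) * x))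
      MeasureTheory.volume (-Real.pi) Real.pi := by
  have hle : (-Real.pi) ≤ Real.pi := by linarith [Real.pi_pos]
  rw [intervalIntegrable_iff_integrableOn_Ioc_of_le hle]
  have hms : AEStronglyMeasurable (fun x => (w x : ℂ) * Complex.exp (Complex.I * (m:ℂ) * x))
      (MeasureTheory.volume.restrict (Set.Ioc (-Real.pi) Real.pi)) := by
    apply Measurable.aestronglyMeasurable
    exact (Complex.measurable_ofReal.comp hw).mul
      (Complex.measurable_exp.comp ((measurable_const (a := Complex.I * (m:ℂ))).mul
        Complex.measurable_ofReal))
  apply Integrable.mono' (integrable_const C) hms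
  have hb' := ae_restrict_of_ae_restrict_of_subset Set.Ioc_subset_Icc_self hb
  filter_upwards [hb'] with x hx
  have h1 : ‖Complex.exp (Complex.I * (m:ℂ) * x)‖ = 1 := by
    rw [Complex.norm_exp]
    have : (Complex.I * (m:ℂ) * x).re = 0 := by simp
    rw [this, Real.exp_zero]
  rw [norm_mul, h1, mul_one, Complex.norm_real, Real.norm_eq_abs]
  exact hx

lemma toeplitz_isHermitian (n : ℕ) (ℓ : ℝ → ℝ) : (toeplitz n ℓ).IsHermitian := by
  apply Matrix.IsHermitian.ext
  intro j k
  show (starRingEnd ℂ) _ = _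
  rw [toeplitz, _root_.map_mul, intervalIntegral_conj]
  have hc : (starRingEnd ℂ) (1 / (2 * (Real.pi : ℂ))) = 1 / (2 * (Real.pi : ℂ)) := by
    rw [map_div₀, _root_.map_one, _root_.map_mul, Complex.conj_ofReal, map_ofNat]
  rw [hc, toeplitz]
  congr 1
  refine intervalIntegral.integral_congr fun x hx => ?_
  rw [_root_.map_mul, Complex.conj_ofReal, ← Complex.exp_conj]
  congr 1
  simp only [_root_.map_mul, Complex.conj_I, Complex.conj_ofReal, map_intCast]
  push_cast
  ring

lemma toeplitz_diag (n : ℕ) (ℓ : ℝ → ℝ)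
    (hmean : (1 / (2 * Real.pi)) * (∫ x in (-Real.pi)..Real.pi, ℓ x) = 1) (j : Fin n) :
    toeplitz n ℓ j j = 1 := by
  rw [toeplitz]
  simp only [sub_self, Int.cast_zero, mul_zero, zero_mul, Complex.exp_zero, mul_one]
  rw [intervalIntegral.integral_ofReal]
  exact_mod_cast congrArg (Complex.ofReal) hmean

lemma toeplitz_split (n : ℕ) (ℓ : ℝ → ℝ) (hmeas : Measurable ℓ)
    (hbdd : ∀ᵐ x ∂(volume.restrict (Set.Icc (-Real.pi) Real.pi)),
      1 / 2 ≤ ℓ x ∧ ℓ x ≤ 3 / 2) :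
    toeplitz n ℓ = toeplitz n (fun x => ℓ x - 1/2) + (2⁻¹ : ℂ) • 1 := by
  ext j k
  simp only [Matrix.add_apply, Matrix.smul_apply, Matrix.one_apply, smul_eq_mul]
  simp only [toeplitz]
  have h1 : IntervalIntegrable
      (fun x => ((ℓ x - 1/2 : ℝ) : ℂ) * Complex.exp (Complex.I * (((j:ℤ) - (k:ℤ) : ℤ):ℂ) * x))
      MeasureTheory.volume (-Real.pi) Real.pi := by
    refine integrable_mul_exp (hmeas.sub measurable_const) (C := 1) ?_ _
    filter_upwards [hbdd] with x hx
    rw [Pi.sub_apply, abs_le]; exact ⟨by linarith [hx.1], by linarith [hx.2]⟩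
  have h2 : IntervalIntegrable
      (fun x => ((1/2 : ℝ) : ℂ) * Complex.exp (Complex.I * (((j:ℤ) - (k:ℤ) : ℤ):ℂ) * x))
      MeasureTheory.volume (-Real.pi) Real.pi := by
    refine integrable_mul_exp (w := fun _ => (1/2:ℝ)) measurable_const (C := 1/2) ?_ _
    filter_upwards with x
    rw [abs_of_nonneg] <;> norm_num
  have hsum : (fun x : ℝ => (ℓ x : ℂ) *
        Complex.exp (Complex.I * (((j:ℤ) - (k:ℤ) : ℤ):ℂ) * x)) =
      fun x => ((ℓ x - 1/2 : ℝ) : ℂ) * Complex.exp (Complex.I * (((j:ℤ) - (k:ℤ) : ℤ):ℂ) * x)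
        + ((1/2 : ℝ) : ℂ) * Complex.exp (Complex.I * (((j:ℤ) - (k:ℤ) : ℤ):ℂ) * x) := by
    funext x; push_cast; ring
  rw [hsum, intervalIntegral.integral_add h1 h2, mul_add, intervalIntegral.integral_const_mul,
    exp_orth]
  have hπ : ((Real.pi : ℂ)) ≠ 0 := Complex.ofReal_ne_zero.mpr Real.pi_ne_zero
  by_cases hjk : j = k
  · subst hjk
    rw [if_pos rfl, if_pos (by ring : ((j:ℤ) - (j:ℤ) : ℤ) = 0)]
    push_cast
    field_simp
  · have hm : ((j:ℤ) - (k:ℤ) : ℤ) ≠ 0 := sub_ne_zero.mpr (fun h => hjk (Fin.val_injective (by exact_mod_cast h)))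
    rw [if_neg hm, if_neg hjk]
    push_cast
    ring

lemma qf_eq (n : ℕ) {w : ℝ → ℝ} (hw : Measurable w) {C : ℝ}
    (hb : ∀ᵐ x ∂(MeasureTheory.volume.restrict (Set.Icc (-Real.pi) Real.pi)), |w x| ≤ C)
    (v : Fin n → ℂ) :
    star v ⬝ᵥ ((toeplitz n w) *ᵥ v) =
      (((1 / (2 * Real.pi)) * ∫ x in (-Real.pi)..Real.pi,
        w x * Complex.normSq (∑ k : Fin n, v k *
          Complex.exp (Complex.I * ((-(k:ℤ) : ℤ) : ℂ) * x)) : ℝ) : ℂ) := by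
  have hterm : ∀ (j k : Fin n), (starRingEnd ℂ) (v j) * (toeplitz n w j k * v k)
      = (1 / (2 * (Real.pi:ℂ))) * ∫ x in (-Real.pi)..Real.pi,
          (starRingEnd ℂ) (v j) * ((w x:ℂ) *
            Complex.exp (Complex.I * (((j:ℤ) - (k:ℤ) : ℤ):ℂ) * x)) * v k := by
    intro j k
    simp only [toeplitz]
    have hre : (fun x : ℝ => (starRingEnd ℂ) (v j) * ((w x:ℂ) *
          Complex.exp (Complex.I * (((j:ℤ) - (k:ℤ) : ℤ):ℂ) * x)) * v k)
        = fun x : ℝ => (starRingEnd ℂ) (v j) * (((w x:ℂ) *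
          Complex.exp (Complex.I * (((j:ℤ) - (k:ℤ) : ℤ):ℂ) * x)) * v k) := by
      funext x; ring
    rw [hre, intervalIntegral.integral_const_mul, intervalIntegral.integral_mul_const]
    ring
  have h1 : star v ⬝ᵥ (toeplitz n w *ᵥ v)
      = ∑ j : Fin n, ∑ k : Fin n, (starRingEnd ℂ) (v j) * (toeplitz n w j k * v k) := by
    simp only [dotProduct, Matrix.mulVec, Pi.star_apply, RCLike.star_def, Finset.mul_sum]
  rw [h1]
  simp_rw [hterm, ← Finset.mul_sum]
  have hswap := intervalIntegral.integral_finset_sum (μ := MeasureTheory.volume)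
    (a := -Real.pi) (b := Real.pi) (s := Finset.univ)
    (f := fun (p : Fin n × Fin n) (x : ℝ) => (starRingEnd ℂ) (v p.1) * ((w x:ℂ) *
      Complex.exp (Complex.I * (((p.1:ℤ) - (p.2:ℤ) : ℤ):ℂ) * x)) * v p.2)
    (fun p _ => (((integrable_mul_exp hw hb ((p.1:ℤ) - (p.2:ℤ))).const_mul
        ((starRingEnd ℂ) (v p.1))).mul_const (v p.2)))
  have hcollect : (∑ j : Fin n, ∑ k : Fin n, ∫ x in (-Real.pi)..Real.pi,
      (starRingEnd ℂ) (v j) * ((w x:ℂ) *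
        Complex.exp (Complex.I * (((j:ℤ) - (k:ℤ) : ℤ):ℂ) * x)) * v k)
      = ∫ x in (-Real.pi)..Real.pi, ∑ p : Fin n × Fin n,
          (starRingEnd ℂ) (v p.1) * ((w x:ℂ) *
            Complex.exp (Complex.I * (((p.1:ℤ) - (p.2:ℤ) : ℤ):ℂ) * x)) * v p.2 :=
    ((Fintype.sum_prod_type (f := fun p : Fin n × Fin n =>
      ∫ x in (-Real.pi)..Real.pi, (starRingEnd ℂ) (v p.1) * ((w x:ℂ) *
        Complex.exp (Complex.I * (((p.1:ℤ) - (p.2:ℤ) : ℤ):ℂ) * x)) * v p.2)).symm).trans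
      hswap.symm
  rw [hcollect]
  have hpt : ∀ x : ℝ, (∑ p : Fin n × Fin n, (starRingEnd ℂ) (v p.1) * ((w x:ℂ) *
        Complex.exp (Complex.I * (((p.1:ℤ) - (p.2:ℤ) : ℤ):ℂ) * x)) * v p.2)
      = ((w x * Complex.normSq (∑ k : Fin n, v k *
          Complex.exp (Complex.I * ((-(k:ℤ) : ℤ) : ℂ) * x)) : ℝ) : ℂ) := by
    intro x
    have hrhs : ((w x * Complex.normSq (∑ k : Fin n, v k *
          Complex.exp (Complex.I * ((-(k:ℤ) : ℤ) : ℂ) * x)) : ℝ) : ℂ)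
        = (w x : ℂ) * ((starRingEnd ℂ) (∑ k : Fin n, v k *
            Complex.exp (Complex.I * ((-(k:ℤ) : ℤ) : ℂ) * x)) *
          (∑ k : Fin n, v k * Complex.exp (Complex.I * ((-(k:ℤ) : ℤ) : ℂ) * x))) := by
      rw [Complex.ofReal_mul]
      congr 1
      rw [mul_comm, Complex.mul_conj]
    rw [hrhs, map_sum, Finset.sum_mul_sum, Finset.mul_sum, Fintype.sum_prod_type]
    simp_rw [Finset.mul_sum]
    refine Finset.sum_congr rfl fun j _ => Finset.sum_congr rfl fun k _ => ?_
    have hconj : (starRingEnd ℂ) (Complex.exp (Complex.I * ((-(j:ℤ) : ℤ):ℂ) * x))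
        = Complex.exp (Complex.I * (((j:ℤ) : ℤ):ℂ) * x) := by
      rw [← Complex.exp_conj]
      congr 1
      simp only [_root_.map_mul, Complex.conj_I, map_intCast, Complex.conj_ofReal]
      push_cast
      ring
    have hmul : Complex.exp (Complex.I * (((j:ℤ) : ℤ):ℂ) * x) *
          Complex.exp (Complex.I * ((-(k:ℤ) : ℤ):ℂ) * x)
        = Complex.exp (Complex.I * (((j:ℤ) - (k:ℤ) : ℤ):ℂ) * x) := by
      rw [← Complex.exp_add]
      congr 1
      push_cast
      ring
    rw [_root_.map_mul, hconj, ← hmul]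
    ring
  simp_rw [hpt]
  rw [intervalIntegral.integral_ofReal, Complex.ofReal_mul]
  congr 1
  push_cast
  ring

lemma qf_re_nonneg (n : ℕ) {w : ℝ → ℝ} (hw : Measurable w) {C : ℝ}
    (hb : ∀ᵐ x ∂(MeasureTheory.volume.restrict (Set.Icc (-Real.pi) Real.pi)), |w x| ≤ C)
    (hpos : ∀ᵐ x ∂(MeasureTheory.volume.restrict (Set.Icc (-Real.pi) Real.pi)), 0 ≤ w x)
    (v : Fin n → ℂ) :
    0 ≤ (star v ⬝ᵥ ((toeplitz n w) *ᵥ v)).re := by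
  rw [qf_eq n hw hb v, Complex.ofReal_re]
  apply mul_nonneg (by positivity)
  refine intervalIntegral.integral_nonneg_of_ae_restrict neg_pi_le ?_
  filter_upwards [hpos] with x hx
  exact mul_nonneg hx (Complex.normSq_nonneg _)

/-- scalar inequality : log t ≥ (t-1) - (t-1)^2 for t ≥ 1/2 -/
lemma log_ge (t : ℝ) (ht : 1/2 ≤ t) : (t - 1) - (t - 1)^2 ≤ Real.log t := by
  rcases le_or_gt 1 t with h1 | h1
  · have ht0 : 0 < t := by linarith
    have := Real.one_sub_inv_le_log_of_pos ht0
    have hinv : t⁻¹ ≤ 1 - (t-1) + (t-1)^2 := by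
      rw [inv_le_iff_one_le_mul₀ ht0]
      nlinarith [pow_nonneg (by linarith : (0:ℝ) ≤ t - 1) 3]
    nlinarith [pow_nonneg (by linarith : (0:ℝ) ≤ t - 1) 3, this]
  · set x := 1 - t with hx
    have hx0 : 0 < x := by simp only [hx]; linarith
    have hx2 : x ≤ 1/2 := by simp only [hx]; linarith
    have h := Real.abs_log_sub_add_sum_range_le
      (x := x) (by rw [abs_of_pos hx0]; linarith) 4
    have hsum : (∑ i ∈ Finset.range 4, x ^ (i + 1) / (i + 1))
        = x + x^2/2 + x^3/3 + x^4/4 := by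
      norm_num [Finset.sum_range_succ]
    rw [hsum, abs_of_pos hx0] at h
    have h1t : 1 - x = t := by rw [hx]; ring
    rw [h1t] at h
    norm_num at h
    have habs := abs_le.mp h
    have hR : x ^ 5 / t ≤ 2 * x^5 := by
      rw [div_le_iff₀ (by linarith : (0:ℝ) < t)]
      nlinarith [pow_nonneg hx0.le 5]
    have hx3 : x^3 ≤ x^2 * (1/2) := by nlinarith [sq_nonneg x]
    have hx4 : x^4 ≤ x^2 * (1/4) := by nlinarith [sq_nonneg x, sq_nonneg (x*x)]
    have hx5 : x^5 ≤ x^2 * (1/8) := by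
      nlinarith [sq_nonneg x, sq_nonneg (x*x), pow_nonneg hx0.le 3]
    have ht1 : t - 1 = -x := by rw [hx]; ring
    rw [ht1]
    have hgoal : -x - (-x)^2 ≤ Real.log t := by
      have hlow := habs.1
      nlinarith [hlow, hR, hx3, hx4, hx5]
    linarith [hgoal]

lemma sum_eigenvalues {n : ℕ} {A : Matrix (Fin n) (Fin n) ℂ} (hA : A.IsHermitian) :
    (∑ i, (hA.eigenvalues i : ℂ)) = Matrix.trace A := by
  have hU : (hA.eigenvectorUnitary : Matrix (Fin n) (Fin n) ℂ) *
      star (hA.eigenvectorUnitary : Matrix (Fin n) (Fin n) ℂ) = 1 :=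
    (Matrix.mem_unitaryGroup_iff).mp (hA.eigenvectorUnitary).2
  have hD : star (hA.eigenvectorUnitary : Matrix (Fin n) (Fin n) ℂ) * A *
      (hA.eigenvectorUnitary : Matrix (Fin n) (Fin n) ℂ) =
        Matrix.diagonal (RCLike.ofReal ∘ hA.eigenvalues) := by
    have h := hA.conjStarAlgAut_star_eigenvectorUnitary
    rwa [Unitary.conjStarAlgAut_apply, Unitary.coe_star, star_star] at h
  have h1 : (∑ i, (hA.eigenvalues i : ℂ))
      = Matrix.trace (Matrix.diagonal (RCLike.ofReal ∘ hA.eigenvalues)) := by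
    rw [Matrix.trace_diagonal]
    rfl
  rw [h1, ← hD, Matrix.trace_mul_comm, ← Matrix.mul_assoc, hU, Matrix.one_mul]

lemma sum_sq_eigenvalues {n : ℕ} {A : Matrix (Fin n) (Fin n) ℂ} (hA : A.IsHermitian) :
    (∑ i, ((hA.eigenvalues i : ℂ))^2) = Matrix.trace (A * A) := by
  have hU : (hA.eigenvectorUnitary : Matrix (Fin n) (Fin n) ℂ) *
      star (hA.eigenvectorUnitary : Matrix (Fin n) (Fin n) ℂ) = 1 :=
    (Matrix.mem_unitaryGroup_iff).mp (hA.eigenvectorUnitary).2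
  have hD : star (hA.eigenvectorUnitary : Matrix (Fin n) (Fin n) ℂ) * A *
      (hA.eigenvectorUnitary : Matrix (Fin n) (Fin n) ℂ) =
        Matrix.diagonal (RCLike.ofReal ∘ hA.eigenvalues) := by
    have h := hA.conjStarAlgAut_star_eigenvectorUnitary
    rwa [Unitary.conjStarAlgAut_apply, Unitary.coe_star, star_star] at h
  have h1 : (∑ i, ((hA.eigenvalues i : ℂ))^2)
      = Matrix.trace ((Matrix.diagonal (RCLike.ofReal ∘ hA.eigenvalues)) *
          (Matrix.diagonal (RCLike.ofReal ∘ hA.eigenvalues))) := by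
    rw [Matrix.diagonal_mul_diagonal, Matrix.trace_diagonal]
    simp [Function.comp, sq]
  rw [h1, ← hD]
  set U := (hA.eigenvectorUnitary : Matrix (Fin n) (Fin n) ℂ) with hUdef
  have key : (star U * A * U) * (star U * A * U) = star U * (A * A) * U := by
    simp only [Matrix.mul_assoc]
    rw [show U * (star U * (A * U)) = (U * star U) * (A * U) from
      (Matrix.mul_assoc _ _ _).symm, hU, Matrix.one_mul]
  rw [key, Matrix.trace_mul_comm, ← Matrix.mul_assoc, hU, Matrix.one_mul]

lemma trace_sq_eq {n : ℕ} {A : Matrix (Fin n) (Fin n) ℂ} (hA : A.IsHermitian) :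
    Matrix.trace (A * A) = ((∑ j, ∑ k, Complex.normSq (A j k) : ℝ) : ℂ) := by
  have hent : ∀ j k, A j k * A k j = ((Complex.normSq (A j k) : ℝ) : ℂ) := by
    intro j k
    have h := congr_fun (congr_fun hA k) j
    rw [Matrix.conjTranspose_apply] at h
    rw [← h, RCLike.star_def, Complex.mul_conj]
  rw [Matrix.trace]
  simp only [Matrix.diag_apply, Matrix.mul_apply]
  simp_rw [hent]
  push_cast
  rfl

private instance fact_two_pi_pos : Fact (0 < 2 * Real.pi) := ⟨by positivity⟩

lemma fourierCoeff_liftIoc (g : ℝ → ℂ) (m : ℤ) :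
    fourierCoeff (AddCircle.liftIoc (2 * Real.pi) (-Real.pi) g) m
      = (1 / (2 * (Real.pi:ℂ))) * ∫ x in (-Real.pi)..Real.pi,
          Complex.exp (Complex.I * ((-m : ℤ) : ℂ) * x) * g x := by
  rw [fourierCoeff_liftIoc_eq, fourierCoeffOn_eq_integral]
  have hb : -Real.pi + 2 * Real.pi = Real.pi := by ring
  rw [hb]
  have h2 : Real.pi - -Real.pi = 2 * Real.pi := by ring
  rw [Complex.real_smul]
  have hcongr : ∀ x ∈ Set.uIcc (-Real.pi) Real.pi,
      (fourier (-m) (x : AddCircle (Real.pi - -Real.pi))) • g x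
        = Complex.exp (Complex.I * ((-m : ℤ) : ℂ) * x) * g x := by
    intro x _
    rw [fourier_coe_apply, smul_eq_mul]
    congr 2
    rw [h2]
    have hπ : (Real.pi : ℂ) ≠ 0 := Complex.ofReal_ne_zero.mpr Real.pi_ne_zero
    push_cast
    field_simp
  rw [intervalIntegral.integral_congr hcongr]
  congr 1
  rw [h2]
  push_cast
  ring

lemma bessel (g : ℝ → ℂ) (hgmeas : Measurable g) {C : ℝ}
    (hgb : ∀ᵐ x ∂(MeasureTheory.volume.restrict (Set.Icc (-Real.pi) Real.pi)), ‖g x‖ ≤ C)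
    (s : Finset ℤ) :
    ∑ m ∈ s, ‖fourierCoeff (AddCircle.liftIoc (2 * Real.pi) (-Real.pi) g) m‖^2
      ≤ (1 / (2 * Real.pi)) * ∫ x in (-Real.pi)..Real.pi, ‖g x‖^2 := by
  set G := AddCircle.liftIoc (2 * Real.pi) (-Real.pi) g with hG
  have hGmeas : Measurable G := by
    have : G = (Set.Ioc (-Real.pi) (-Real.pi + 2 * Real.pi)).restrict g ∘
        (AddCircle.measurableEquivIoc (2 * Real.pi) (-Real.pi)) := rfl
    rw [this]
    exact (hgmeas.comp measurable_subtype_coe).comp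
      (AddCircle.measurableEquivIoc (2 * Real.pi) (-Real.pi)).measurable
  have hIoc : Set.Ioc (-Real.pi) (-Real.pi + 2 * Real.pi) = Set.Ioc (-Real.pi) Real.pi := by
    congr 1; ring
  have hGbound : ∀ᵐ z ∂(AddCircle.haarAddCircle (T := 2 * Real.pi)), ‖G z‖ ≤ C := by
    have h1 : ∀ᵐ z ∂(volume : Measure (AddCircle (2 * Real.pi))), ‖G z‖ ≤ C := by
      rw [← (AddCircle.measurePreserving_mk (2 * Real.pi) (-Real.pi)).map_eq]
      rw [ae_map_iff AddCircle.measurable_mk'.aemeasurable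
        (measurableSet_le hGmeas.norm measurable_const)]
      have h2 := ae_restrict_of_ae_restrict_of_subset Set.Ioc_subset_Icc_self hgb
      rw [← hIoc] at h2
      filter_upwards [h2, ae_restrict_mem measurableSet_Ioc] with x hx hmem
      rwa [hG, AddCircle.liftIoc_coe_apply hmem]
    rw [AddCircle.volume_eq_smul_haarAddCircle, ae_iff] at h1
    rw [ae_iff]
    simpa [Measure.smul_apply, Real.pi_pos, not_le.mpr Real.pi_pos] using h1
  have hG2 : MemLp G 2 AddCircle.haarAddCircle :=
    MemLp.of_bound hGmeas.aestronglyMeasurable C hGbound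
  set F := hG2.toLp G with hF
  have hFG : ⇑F =ᵐ[AddCircle.haarAddCircle] G := hG2.coeFn_toLp
  have hcoeff : ∀ m : ℤ, fourierCoeff (⇑F) m = fourierCoeff G m := by
    intro m
    unfold fourierCoeff
    refine integral_congr_ae ?_
    filter_upwards [hFG] with z hz
    rw [hz]
  have hnormF : (‖F‖:ℝ)^2 = ∫ t, ‖F t‖^2 ∂AddCircle.haarAddCircle := by
    have H₃ := congr_arg RCLike.re (@L2.inner_def (AddCircle (2 * Real.pi)) ℂ ℂ _ _ _ _ _ F F)
    rw [← integral_re (L2.integrable_inner F F)] at H₃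
    simp only [← norm_sq_eq_re_inner (𝕜 := ℂ)] at H₃
    exact H₃
  have hend : ∫ t, ‖F t‖^2 ∂AddCircle.haarAddCircle
      = (1 / (2 * Real.pi)) * ∫ x in (-Real.pi)..Real.pi, ‖g x‖^2 := by
    have e1 : ∫ t, ‖F t‖^2 ∂AddCircle.haarAddCircle
        = ∫ t, ‖G t‖^2 ∂AddCircle.haarAddCircle := by
      refine integral_congr_ae ?_
      filter_upwards [hFG] with z hz
      rw [hz]
    have e2 : ∫ t, ‖G t‖^2 ∂(volume : Measure (AddCircle (2 * Real.pi)))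
        = ∫ x in (-Real.pi)..(-Real.pi + 2 * Real.pi), ‖G (x : AddCircle (2 * Real.pi))‖^2 :=
      (AddCircle.intervalIntegral_preimage (2 * Real.pi) (-Real.pi) (fun z => ‖G z‖^2)).symm
    have e3 : ∫ t, ‖G t‖^2 ∂(volume : Measure (AddCircle (2 * Real.pi)))
        = (2 * Real.pi) * ∫ t, ‖G t‖^2 ∂AddCircle.haarAddCircle := by
      rw [AddCircle.volume_eq_smul_haarAddCircle, integral_smul_measure,
        ENNReal.toReal_ofReal (by positivity : (0:ℝ) ≤ 2 * Real.pi), smul_eq_mul]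
    have e4 : ∫ x in (-Real.pi)..(-Real.pi + 2 * Real.pi), ‖G (x : AddCircle (2 * Real.pi))‖^2
        = ∫ x in (-Real.pi)..Real.pi, ‖g x‖^2 := by
      have hbb : -Real.pi + 2 * Real.pi = Real.pi := by ring
      rw [hbb]
      refine intervalIntegral.integral_congr_ae ?_
      have : ∀ᵐ x ∂(volume : Measure ℝ), x ∈ Set.Ioc (-Real.pi) Real.pi →
          ‖G (x : AddCircle (2 * Real.pi))‖^2 = ‖g x‖^2 := by
        filter_upwards with x hx
        rw [hG, AddCircle.liftIoc_coe_apply (by rwa [hIoc])]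
      simpa [Set.uIoc_of_le (by linarith [Real.pi_pos] : (-Real.pi) ≤ Real.pi)] using this
    rw [e1]
    rw [e2, e4] at e3
    rw [e3]
    have hπ : (2 * Real.pi) ≠ 0 := by positivity
    field_simp
  calc ∑ m ∈ s, ‖fourierCoeff G m‖^2
      = ∑ m ∈ s, ‖(inner (𝕜 := ℂ) (fourierLp 2 m) F : ℂ)‖^2 := by
        refine Finset.sum_congr rfl fun m _ => ?_
        rw [← coe_fourierBasis, ← HilbertBasis.repr_apply_apply, fourierBasis_repr, hcoeff]
    _ ≤ ‖F‖^2 := orthonormal_fourier.sum_inner_products_le F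
    _ = (1 / (2 * Real.pi)) * ∫ x in (-Real.pi)..Real.pi, ‖g x‖^2 := by
        rw [hnormF, hend]

lemma toeplitz_sub_one (n : ℕ) (ℓ : ℝ → ℝ) (hmeas : Measurable ℓ)
    (hbdd : ∀ᵐ x ∂(volume.restrict (Set.Icc (-Real.pi) Real.pi)),
      1 / 2 ≤ ℓ x ∧ ℓ x ≤ 3 / 2) (j k : Fin n) :
    toeplitz n ℓ j k - (if j = k then 1 else 0)
      = fourierCoeff (AddCircle.liftIoc (2 * Real.pi) (-Real.pi)
          (fun x => (ℓ x : ℂ) - 1)) ((k:ℤ) - (j:ℤ)) := by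
  rw [fourierCoeff_liftIoc]
  have h1 : IntervalIntegrable
      (fun x => (ℓ x : ℂ) * Complex.exp (Complex.I * (((j:ℤ) - (k:ℤ) : ℤ):ℂ) * x))
      MeasureTheory.volume (-Real.pi) Real.pi := by
    refine integrable_mul_exp hmeas (C := 3/2) ?_ _
    filter_upwards [hbdd] with x hx
    rw [abs_le]; exact ⟨by linarith [hx.1], by linarith [hx.2]⟩
  have h2 : IntervalIntegrable
      (fun x => ((1:ℝ) : ℂ) * Complex.exp (Complex.I * (((j:ℤ) - (k:ℤ) : ℤ):ℂ) * x))
      MeasureTheory.volume (-Real.pi) Real.pi := by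
    refine integrable_mul_exp (w := fun _ => (1:ℝ)) measurable_const (C := 1) ?_ _
    filter_upwards with x
    norm_num
  have hsplit : (fun x : ℝ => Complex.exp (Complex.I * ((-(((k:ℤ) - (j:ℤ))) : ℤ):ℂ) * x)
        * ((ℓ x : ℂ) - 1))
      = fun x => (ℓ x : ℂ) * Complex.exp (Complex.I * (((j:ℤ) - (k:ℤ) : ℤ):ℂ) * x)
          - ((1:ℝ):ℂ) * Complex.exp (Complex.I * (((j:ℤ) - (k:ℤ) : ℤ):ℂ) * x) := by
    funext x
    have : ((-(((k:ℤ) - (j:ℤ))) : ℤ):ℂ) = (((j:ℤ) - (k:ℤ) : ℤ):ℂ) := by push_cast; ring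
    rw [this]
    push_cast
    ring
  rw [hsplit, intervalIntegral.integral_sub h1 h2, mul_sub]
  congr 1
  have hone : ∀ x : ℝ, ((1:ℝ):ℂ) * Complex.exp (Complex.I * (((j:ℤ) - (k:ℤ) : ℤ):ℂ) * x)
      = Complex.exp (Complex.I * (((j:ℤ) - (k:ℤ) : ℤ):ℂ) * x) := by
    intro x; norm_num
  rw [intervalIntegral.integral_congr (fun x _ => hone x), exp_orth]
  by_cases hjk : j = k
  · subst hjk
    rw [if_pos rfl, if_pos (by ring : ((j:ℤ) - (j:ℤ) : ℤ) = 0)]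
    have hπ : ((Real.pi : ℂ)) ≠ 0 := Complex.ofReal_ne_zero.mpr Real.pi_ne_zero
    push_cast
    field_simp
  · have hm : ((j:ℤ) - (k:ℤ) : ℤ) ≠ 0 :=
      sub_ne_zero.mpr (fun h => hjk (Fin.val_injective (by exact_mod_cast h)))
    rw [if_neg hjk, if_neg hm]
    simp

lemma eig_ge_half (n : ℕ) (ℓ : ℝ → ℝ) (hmeas : Measurable ℓ)
    (hbdd : ∀ᵐ x ∂(volume.restrict (Set.Icc (-Real.pi) Real.pi)),
      1 / 2 ≤ ℓ x ∧ ℓ x ≤ 3 / 2) (i : Fin n) :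
    1/2 ≤ (toeplitz_isHermitian n ℓ).eigenvalues i := by
  set hA := toeplitz_isHermitian n ℓ with hAdef
  rw [hA.eigenvalues_eq i]
  set u : Fin n → ℂ := ⇑(hA.eigenvectorBasis i) with hu
  rw [toeplitz_split n ℓ hmeas hbdd, Matrix.add_mulVec, Matrix.smul_mulVec,
    Matrix.one_mulVec, dotProduct_add]
  rw [map_add]
  have huu : star u ⬝ᵥ u = ((∑ j, Complex.normSq (u j) : ℝ) : ℂ) := by
    simp only [dotProduct, Pi.star_apply, RCLike.star_def]
    simp_rw [← Complex.normSq_eq_conj_mul_self]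
    norm_cast
  have hsum1 : ∑ j, Complex.normSq (u j) = 1 := by
    have hn : ‖hA.eigenvectorBasis i‖ = 1 := hA.eigenvectorBasis.orthonormal.1 i
    rw [EuclideanSpace.norm_eq] at hn
    have h0 : (0:ℝ) ≤ ∑ j, ‖hA.eigenvectorBasis i j‖^2 := by positivity
    have hS : ∑ j, ‖hA.eigenvectorBasis i j‖^2 = 1 := by
      nlinarith [Real.sq_sqrt h0, hn]
    rw [← hS]
    refine Finset.sum_congr rfl fun j _ => ?_
    rw [← Complex.sq_norm]
  have h2 : RCLike.re ((star u) ⬝ᵥ ((2⁻¹ : ℂ) • u)) = 1/2 := by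
    rw [dotProduct_smul, huu, hsum1]
    simp
  have h3 : 0 ≤ RCLike.re (star u ⬝ᵥ (toeplitz n (fun x => ℓ x - 1/2) *ᵥ u)) := by
    have hb : ∀ᵐ x ∂(volume.restrict (Set.Icc (-Real.pi) Real.pi)),
        |ℓ x - 1/2| ≤ 1 := by
      filter_upwards [hbdd] with x hx
      rw [abs_le]; exact ⟨by linarith [hx.1], by linarith [hx.2]⟩
    have hpos : ∀ᵐ x ∂(volume.restrict (Set.Icc (-Real.pi) Real.pi)),
        0 ≤ ℓ x - 1/2 := by
      filter_upwards [hbdd] with x hx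
      linarith [hx.1]
    exact qf_re_nonneg n (hmeas.sub measurable_const) hb hpos u
  rw [h2]
  linarith [h3]

end ToeplitzAux

/-- Log-determinant lower bound for Toeplitz matrices: if `ℓ ∈ L²(h)` satisfies
`∫ ℓ h = 1` and `1/2 ≤ ℓ ≤ 3/2` a.e. on `[-π,π]`, then
`log det T_n(ℓ) ≥ -n ‖ℓ - 1‖²_{L²(h)}` (the determinant is real since `T_n(ℓ)`
is Hermitian). -/
theorem toeplitz_logdet_lower (n : ℕ) (ℓ : ℝ → ℝ)
    (hmeas : Measurable ℓ)
    (hL2 : IntegrableOn (fun x => ℓ x ^ 2) (Set.Icc (-Real.pi) Real.pi))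
    (hmean : (1 / (2 * Real.pi)) * (∫ x in (-Real.pi)..Real.pi, ℓ x) = 1)
    (hbdd : ∀ᵐ x ∂(volume.restrict (Set.Icc (-Real.pi) Real.pi)),
      1 / 2 ≤ ℓ x ∧ ℓ x ≤ 3 / 2) :
    Real.log ((toeplitz n ℓ).det.re) ≥
      -(n : ℝ) * ((1 / (2 * Real.pi)) * ∫ x in (-Real.pi)..Real.pi, (ℓ x - 1) ^ 2) := by
  classical
  set V := (1 / (2 * Real.pi)) * ∫ x in (-Real.pi)..Real.pi, (ℓ x - 1)^2 with hV
  set hA := ToeplitzAux.toeplitz_isHermitian n ℓ with hAdef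
  set lam := hA.eigenvalues with hlam
  have hhalf : ∀ i, 1/2 ≤ lam i := fun i => ToeplitzAux.eig_ge_half n ℓ hmeas hbdd i
  have hpos : ∀ i, (0:ℝ) < lam i := fun i => lt_of_lt_of_le (by norm_num) (hhalf i)
  have hdet : (toeplitz n ℓ).det.re = ∏ i, lam i := by
    rw [hA.det_eq_prod_eigenvalues]
    norm_cast
  have htr : ∑ i, lam i = n := by
    have h1 := ToeplitzAux.sum_eigenvalues hA
    have h2 : Matrix.trace (toeplitz n ℓ) = (n : ℂ) := by
      have hd : ∀ j : Fin n, (toeplitz n ℓ).diag j = 1 :=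
        fun j => ToeplitzAux.toeplitz_diag n ℓ hmean j
      rw [Matrix.trace, Finset.sum_congr rfl (fun j _ => hd j)]
      simp
    rw [h2] at h1
    exact_mod_cast h1
  have hsq : ∑ i, (lam i)^2 = ∑ j, ∑ k, Complex.normSq (toeplitz n ℓ j k) := by
    have h1 := (ToeplitzAux.sum_sq_eigenvalues hA).trans (ToeplitzAux.trace_sq_eq hA)
    exact_mod_cast h1
  have hrow : ∀ j : Fin n,
      ∑ k, Complex.normSq (toeplitz n ℓ j k - if j = k then 1 else 0) ≤ V := by
    intro j
    calc ∑ k, Complex.normSq (toeplitz n ℓ j k - if j = k then 1 else 0)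
        = ∑ k : Fin n, ‖fourierCoeff (AddCircle.liftIoc (2 * Real.pi) (-Real.pi)
            (fun x => (ℓ x : ℂ) - 1)) ((k:ℤ) - (j:ℤ))‖^2 := by
          refine Finset.sum_congr rfl fun k _ => ?_
          rw [ToeplitzAux.toeplitz_sub_one n ℓ hmeas hbdd j k, ← Complex.sq_norm]
      _ = ∑ m ∈ Finset.image (fun k : Fin n => (k:ℤ) - (j:ℤ)) Finset.univ,
            ‖fourierCoeff (AddCircle.liftIoc (2 * Real.pi) (-Real.pi)
              (fun x => (ℓ x : ℂ) - 1)) m‖^2 := by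
          rw [Finset.sum_image]
          intro a _ b _ h
          exact Fin.val_injective (by exact_mod_cast sub_left_inj.mp h)
      _ ≤ (1 / (2 * Real.pi)) * ∫ x in (-Real.pi)..Real.pi, ‖(ℓ x : ℂ) - 1‖^2 := by
          refine ToeplitzAux.bessel _
            ((Complex.measurable_ofReal.comp hmeas).sub measurable_const) (C := 1/2) ?_ _
          filter_upwards [hbdd] with x hx
          show ‖(ℓ x : ℂ) - 1‖ ≤ 1/2
          rw [show ((ℓ x : ℂ) - 1) = ((ℓ x - 1 : ℝ) : ℂ) from by push_cast; ring,
            Complex.norm_real, Real.norm_eq_abs, abs_le]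
          exact ⟨by linarith [hx.1], by linarith [hx.2]⟩
      _ = V := by
          rw [hV]
          congr 1
          refine intervalIntegral.integral_congr fun x _ => ?_
          rw [show ((ℓ x : ℂ) - 1) = ((ℓ x - 1 : ℝ) : ℂ) from by push_cast; ring,
            Complex.norm_real, Real.norm_eq_abs, sq_abs]
  have hdiagd : ∀ j : Fin n,
      ∑ k, Complex.normSq (toeplitz n ℓ j k - if j = k then 1 else 0)
        = (∑ k, Complex.normSq (toeplitz n ℓ j k)) - 1 := by
    intro j
    have hper : ∀ k : Fin n, Complex.normSq (toeplitz n ℓ j k - if j = k then 1 else 0)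
        = Complex.normSq (toeplitz n ℓ j k) - (if j = k then 1 else 0) := by
      intro k
      by_cases hjk : j = k
      · subst hjk
        rw [if_pos rfl, if_pos rfl, ToeplitzAux.toeplitz_diag n ℓ hmean j]
        simp
      · rw [if_neg hjk, if_neg hjk, sub_zero, sub_zero]
    rw [Finset.sum_congr rfl (fun k _ => hper k), Finset.sum_sub_distrib]
    congr 1
    simp
  have hsum_sq_diff : ∑ i, (lam i - 1)^2 ≤ n * V := by
    have e1 : ∑ i, (lam i - 1)^2 = (∑ i, (lam i)^2) - 2*(∑ i, lam i) + n := by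
      have hh : ∀ i : Fin n, (lam i - 1)^2 = (lam i)^2 - 2 * lam i + 1 := fun i => by ring
      rw [Finset.sum_congr rfl (fun i _ => hh i), Finset.sum_add_distrib,
        Finset.sum_sub_distrib, ← Finset.mul_sum]
      simp
    calc ∑ i, (lam i - 1)^2 = (∑ i, (lam i)^2) - 2*(∑ i, lam i) + n := e1
      _ = (∑ j, ∑ k, Complex.normSq (toeplitz n ℓ j k)) - n := by rw [hsq, htr]; ring
      _ = ∑ j : Fin n, ((∑ k, Complex.normSq (toeplitz n ℓ j k)) - 1) := by
          rw [Finset.sum_sub_distrib]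
          simp
      _ = ∑ j : Fin n, ∑ k, Complex.normSq (toeplitz n ℓ j k - if j = k then 1 else 0) :=
          Finset.sum_congr rfl fun j _ => (hdiagd j).symm
      _ ≤ ∑ _j : Fin n, V := Finset.sum_le_sum (fun j _ => hrow j)
      _ = n * V := by simp [Finset.sum_const, Finset.card_univ, nsmul_eq_mul]
  rw [ge_iff_le, hdet, Real.log_prod (fun i _ => (hpos i).ne')]
  have hlogsum : ∑ i, ((lam i - 1) - (lam i - 1)^2) ≤ ∑ i, Real.log (lam i) :=
    Finset.sum_le_sum (fun i _ => ToeplitzAux.log_ge _ (hhalf i))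
  have e3 : ∑ i, ((lam i - 1) - (lam i - 1)^2) = -(∑ i, (lam i - 1)^2) := by
    rw [Finset.sum_sub_distrib]
    have h0 : ∑ i, (lam i - 1) = 0 := by
      rw [Finset.sum_sub_distrib, htr]
      simp
    rw [h0]
    ring
  rw [e3] at hlogsum
  nlinarith [hsum_sq_diff, hlogsum]
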